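/- Define g_p(x) = x^p and g_p^tr(A) = tr(A^p) on n×n Hermitian matrices, and let L be the Ornstein–Uhlenbeck generator on M_n^{sa}(ℂ). Then for p ≥ 2: L g_p^tr(A) = p·Σ_{k=0}^{p−2} tr(A^k)·tr(A^{p−2−k}) − p·tr(A^p). -/

import Mathlib

open Matrix

attribute [local instance] Matrix.linftyOpNormedRing Matrix.linftyOpNormedAlgebra

/-- The trace as a continuous `ℝ`-linear map on complex matrices. -/
noncomputable def traceCLM (n : ℕ) : Matrix (Fin n) (Fin n) ℂ →L[ℝ] ℂ :=
  LinearMap.toContinuousLinearMap ((Matrix.traceLinearMap (Fin n) ℂ ℂ).restrictScalars ℝ)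

@[simp] lemma traceCLM_apply (n : ℕ) (M : Matrix (Fin n) (Fin n) ℂ) :
    traceCLM n M = M.trace := rfl

lemma hasDerivAt_matpow {n : ℕ} (A B : Matrix (Fin n) (Fin n) ℂ) (m : ℕ) (s : ℝ) :
    HasDerivAt (fun t : ℝ => (A + t • B) ^ m)
      (∑ k ∈ Finset.range m, (A + s • B) ^ k * B * (A + s • B) ^ (m - 1 - k)) s := by
  induction m with
  | zero => simp only [pow_zero, Finset.range_zero, Finset.sum_empty]; exact hasDerivAt_const s (1 : Matrix (Fin n) (Fin n) ℂ)
  | succ m ih =>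
    have hC : HasDerivAt (fun t : ℝ => A + t • B) B s := by
      have h0 := ((hasDerivAt_id s).smul_const B).const_add A; rw [one_smul] at h0; exact h0
    have h := ih.mul hC
    have heq : ∑ k ∈ Finset.range (m + 1),
          (A + s • B) ^ k * B * (A + s • B) ^ (m + 1 - 1 - k)
        = (∑ k ∈ Finset.range m, (A + s • B) ^ k * B * (A + s • B) ^ (m - 1 - k))
            * (A + s • B) + (A + s • B) ^ m * B := by
      rw [Finset.sum_range_succ, Finset.sum_mul]
      congr 1
      · refine Finset.sum_congr rfl fun k hk => ?_
        rw [Finset.mem_range] at hk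
        have he : (m - 1 - k) + 1 = m + 1 - 1 - k := by omega
        rw [← he, pow_succ]
        simp [mul_assoc]
      · simp
    rw [heq]
    simp only [pow_succ]; exact h

lemma hasDerivAt_trace_matpow {n : ℕ} (A B : Matrix (Fin n) (Fin n) ℂ) (m : ℕ) (s : ℝ) :
    HasDerivAt (fun t : ℝ => ((A + t • B) ^ m).trace)
      ((m : ℂ) * ((A + s • B) ^ (m - 1) * B).trace) s := by
  have h := (traceCLM n).hasFDerivAt.comp_hasDerivAt s (hasDerivAt_matpow A B m s)
  have heq : traceCLM n (∑ k ∈ Finset.range m, (A + s • B) ^ k * B * (A + s • B) ^ (m - 1 - k))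
      = (m : ℂ) * ((A + s • B) ^ (m - 1) * B).trace := by
    rw [traceCLM_apply, Matrix.trace_sum]
    have : ∀ k ∈ Finset.range m,
        ((A + s • B) ^ k * B * (A + s • B) ^ (m - 1 - k)).trace
          = ((A + s • B) ^ (m - 1) * B).trace := by
      intro k hk
      rw [Finset.mem_range] at hk
      have he : (m - 1 - k) + k = m - 1 := by omega
      rw [Matrix.trace_mul_cycle, ← pow_add, he]
    rw [Finset.sum_congr rfl this, Finset.sum_const, Finset.card_range, nsmul_eq_mul]
  replace h := h.congr_deriv heq
  exact h

lemma iteratedDeriv_two_trace {n : ℕ} (A B : Matrix (Fin n) (Fin n) ℂ) (p : ℕ) :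
    iteratedDeriv 2 (fun s : ℝ => ((A + s • B) ^ p).trace) 0
      = (p : ℂ) * ∑ k ∈ Finset.range (p - 1),
          (A ^ k * B * A ^ (p - 1 - 1 - k) * B).trace := by
  rw [show (2:ℕ) = 1 + 1 from rfl, iteratedDeriv_succ, iteratedDeriv_one]
  have hd : deriv (fun s : ℝ => ((A + s • B) ^ p).trace)
      = fun s => (p : ℂ) * ((A + s • B) ^ (p - 1) * B).trace :=
    funext fun s => (hasDerivAt_trace_matpow A B p s).deriv
  rw [hd]
  have h1 : HasDerivAt (fun s : ℝ => ((A + s • B) ^ (p - 1) * B).trace)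
      (traceCLM n ((∑ k ∈ Finset.range (p - 1),
        (A + (0:ℝ) • B) ^ k * B * (A + (0:ℝ) • B) ^ (p - 1 - 1 - k)) * B)) 0 :=
    (traceCLM n).hasFDerivAt.comp_hasDerivAt 0
      ((hasDerivAt_matpow A B (p - 1) 0).mul_const B)
  have h2 := h1.const_mul ((p : ℂ))
  rw [h2.deriv]
  simp only [zero_smul, add_zero, traceCLM_apply, Finset.sum_mul, Matrix.trace_sum]

section Alg
variable {n : ℕ} {ι : Type*} [Fintype ι] [DecidableEq ι]
variable {H : ι → Matrix (Fin n) (Fin n) ℂ}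

lemma herm_decomp (M : Matrix (Fin n) (Fin n) ℂ) :
    ∃ X Y : Matrix (Fin n) (Fin n) ℂ, X.IsHermitian ∧ Y.IsHermitian ∧
      M = X + Complex.I • Y := by
  refine ⟨(2⁻¹ : ℂ) • (M + Mᴴ), ((2⁻¹ : ℂ) * Complex.I) • (Mᴴ - M), ?_, ?_, ?_⟩
  · rw [Matrix.IsHermitian, Matrix.conjTranspose_smul, Matrix.conjTranspose_add,
      Matrix.conjTranspose_conjTranspose,
      show star (2⁻¹ : ℂ) = 2⁻¹ by simp, add_comm]
  · rw [Matrix.IsHermitian, Matrix.conjTranspose_smul, Matrix.conjTranspose_sub,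
      Matrix.conjTranspose_conjTranspose,
      show star ((2⁻¹ : ℂ) * Complex.I) = -((2⁻¹ : ℂ) * Complex.I) by
        simp [Complex.ext_iff],
      neg_smul, ← smul_neg, neg_sub]
  · rw [smul_smul, show Complex.I * ((2⁻¹ : ℂ) * Complex.I) = -2⁻¹ by
      rw [mul_comm, mul_assoc, Complex.I_mul_I]; ring]
    module

lemma expansion
    (horth : ∀ i j, (H i * H j).trace = if i = j then 1 else 0)
    (hspan : ∀ M : Matrix (Fin n) (Fin n) ℂ, M.IsHermitian →
      M ∈ Submodule.span ℝ (Set.range H))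
    (M : Matrix (Fin n) (Fin n) ℂ) :
    ∑ i, ((H i * M).trace) • H i = M := by
  have hadd : ∀ P Q : Matrix (Fin n) (Fin n) ℂ,
      ∑ i, ((H i * (P + Q)).trace) • H i
        = (∑ i, ((H i * P).trace) • H i) + ∑ i, ((H i * Q).trace) • H i := by
    intro P Q
    simp only [Matrix.mul_add, Matrix.trace_add, add_smul, Finset.sum_add_distrib]
  have hlinℂ : ∀ (c : ℂ) (P : Matrix (Fin n) (Fin n) ℂ),
      ∑ i, ((H i * (c • P)).trace) • H i = c • ∑ i, ((H i * P).trace) • H i := by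
    intro c P
    rw [Finset.smul_sum]
    refine Finset.sum_congr rfl fun i _ => ?_
    rw [Matrix.mul_smul, Matrix.trace_smul, smul_assoc]
  have hHerm : ∀ P ∈ Submodule.span ℝ (Set.range H),
      ∑ i, ((H i * P).trace) • H i = P := by
    intro P hP
    induction hP using Submodule.span_induction with
    | mem x hx =>
      obtain ⟨j, rfl⟩ := hx
      simp [horth, ite_smul]
    | zero => simp
    | add x y hx hy ihx ihy => rw [hadd, ihx, ihy]
    | smul r x hx ih =>
      calc ∑ i, ((H i * (r • x)).trace) • H i
          = r • ∑ i, ((H i * x).trace) • H i := by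
            rw [Finset.smul_sum]
            refine Finset.sum_congr rfl fun i _ => ?_
            rw [Matrix.mul_smul, Matrix.trace_smul, smul_assoc]
        _ = r • x := by rw [ih]
  obtain ⟨X, Y, hXh, hYh, hM⟩ := herm_decomp M
  calc ∑ i, ((H i * M).trace) • H i
      = ∑ i, ((H i * (X + Complex.I • Y)).trace) • H i := by rw [← hM]
    _ = (∑ i, ((H i * X).trace) • H i) + Complex.I • ∑ i, ((H i * Y).trace) • H i := by
        rw [hadd, hlinℂ]
    _ = X + Complex.I • Y := by
        rw [hHerm X (hspan X hXh), hHerm Y (hspan Y hYh)]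
    _ = M := hM.symm

lemma completeness
    (horth : ∀ i j, (H i * H j).trace = if i = j then 1 else 0)
    (hspan : ∀ M : Matrix (Fin n) (Fin n) ℂ, M.IsHermitian →
      M ∈ Submodule.span ℝ (Set.range H))
    (a b c d : Fin n) :
    ∑ i, (H i) a b * (H i) c d = if b = c ∧ a = d then (1 : ℂ) else 0 := by
  have h := expansion horth hspan (Matrix.single b a (1 : ℂ))
  have htr : ∀ i, (H i * Matrix.single b a (1 : ℂ)).trace = (H i) a b := by
    intro i
    simp [Matrix.trace, Matrix.mul_apply, Matrix.single, Matrix.diag,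
      ite_and, Finset.sum_ite_eq, Finset.sum_ite_eq']
  calc ∑ i, (H i) a b * (H i) c d
      = (∑ i, ((H i * Matrix.single b a (1:ℂ)).trace) • H i) c d := by
        rw [Matrix.sum_apply]
        refine Finset.sum_congr rfl fun i _ => ?_
        rw [htr i, Matrix.smul_apply, smul_eq_mul]
    _ = (Matrix.single b a (1 : ℂ)) c d := by rw [h]
    _ = if b = c ∧ a = d then (1 : ℂ) else 0 := by
        simp [Matrix.single]

lemma sum_trace_sandwich
    (horth : ∀ i j, (H i * H j).trace = if i = j then 1 else 0)
    (hspan : ∀ M : Matrix (Fin n) (Fin n) ℂ, M.IsHermitian →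
      M ∈ Submodule.span ℝ (Set.range H))
    (X Y : Matrix (Fin n) (Fin n) ℂ) :
    ∑ i, (H i * X * H i * Y).trace = X.trace * Y.trace := by
  have step1 : ∀ i, (H i * X * H i * Y).trace
      = ∑ a, ∑ d, ∑ c, ∑ b, (H i) a b * (H i) c d * (X b c * Y d a) := by
    intro i
    simp only [Matrix.trace, Matrix.diag, Matrix.mul_apply, Finset.sum_mul]
    refine Finset.sum_congr rfl fun a _ => ?_
    refine Finset.sum_congr rfl fun d _ => ?_
    refine Finset.sum_congr rfl fun c _ => ?_
    refine Finset.sum_congr rfl fun b _ => ?_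
    ring
  simp only [step1]
  rw [Finset.sum_comm]
  have swap : ∀ a : Fin n,
      (∑ i, ∑ d, ∑ c, ∑ b, (H i) a b * (H i) c d * (X b c * Y d a))
        = ∑ d, ∑ c, ∑ b, (∑ i, (H i) a b * (H i) c d) * (X b c * Y d a) := by
    intro a
    rw [Finset.sum_comm]
    refine Finset.sum_congr rfl fun d _ => ?_
    rw [Finset.sum_comm]
    refine Finset.sum_congr rfl fun c _ => ?_
    rw [Finset.sum_comm]
    refine Finset.sum_congr rfl fun b _ => ?_
    rw [Finset.sum_mul]
  simp only [swap]
  have key : ∀ (a d c b : Fin n), (∑ i, (H i) a b * (H i) c d) * (X b c * Y d a)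
      = (if b = c ∧ a = d then (1:ℂ) else 0) * (X b c * Y d a) := by
    intro a d c b
    rw [completeness horth hspan a b c d]
  simp only [key, ite_mul, one_mul, zero_mul, ite_and]
  simp only [Finset.sum_ite_eq, Finset.sum_ite_eq', Finset.mem_univ, if_true,
    Finset.sum_ite_irrel, Finset.sum_const_zero]
  rw [Matrix.trace, Matrix.trace, Finset.sum_mul_sum]
  rw [Finset.sum_comm]
  refine Finset.sum_congr rfl fun a _ => ?_
  refine Finset.sum_congr rfl fun c _ => ?_
  simp [Matrix.diag]

end Alg

/-- The Ornstein--Uhlenbeck generator `Lf(A) = Δf(A) - ⟨A, ∇f(A)⟩` applied to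
`g_p^tr(A) = tr(A^p)` on the Euclidean space of `n × n` Hermitian matrices (with inner
product `⟨A,B⟩ = tr(AB)`): since `∇ g_p^tr(A) = p A^{p-1}` and the Laplacian is the sum
of second derivatives along any orthonormal basis `(H i)`, one has for `p ≥ 2`
`L g_p^tr(A) = p Σ_{k=0}^{p-2} tr(A^k) tr(A^{p-2-k}) - p tr(A^p)`. -/
theorem OU_generator_trace_pow (n p : ℕ) (hp : 2 ≤ p) {ι : Type*} [Fintype ι] [DecidableEq ι]
    (H : ι → Matrix (Fin n) (Fin n) ℂ)
    (hherm : ∀ i, (H i).IsHermitian)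
    (horth : ∀ i j, (H i * H j).trace = if i = j then 1 else 0)
    (hspan : ∀ M : Matrix (Fin n) (Fin n) ℂ, M.IsHermitian →
      M ∈ Submodule.span ℝ (Set.range H))
    (A : Matrix (Fin n) (Fin n) ℂ) (hA : A.IsHermitian) :
    (∑ i, iteratedDeriv 2 (fun s : ℝ => ((A + s • H i) ^ p).trace) 0)
        - (A * ((p : ℂ) • A ^ (p - 1))).trace
      = (p : ℂ) * (∑ k ∈ Finset.range (p - 1), (A ^ k).trace * (A ^ (p - 2 - k)).trace)
        - (p : ℂ) * (A ^ p).trace := by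
  have h1 : ∀ i : ι, iteratedDeriv 2 (fun s : ℝ => ((A + s • H i) ^ p).trace) 0
      = (p : ℂ) * ∑ k ∈ Finset.range (p - 1),
          (A ^ k * H i * A ^ (p - 2 - k) * H i).trace := by
    intro i
    have he : p - 1 - 1 = p - 2 := by omega
    rw [iteratedDeriv_two_trace A (H i) p, he]
  have h2 : (∑ i, iteratedDeriv 2 (fun s : ℝ => ((A + s • H i) ^ p).trace) 0)
      = (p : ℂ) * ∑ k ∈ Finset.range (p - 1), (A ^ k).trace * (A ^ (p - 2 - k)).trace := by
    simp only [h1]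
    rw [← Finset.mul_sum, Finset.sum_comm]
    congr 1
    refine Finset.sum_congr rfl fun k _ => ?_
    rw [← sum_trace_sandwich horth hspan (A ^ k) (A ^ (p - 2 - k))]
    refine Finset.sum_congr rfl fun i _ => ?_
    rw [Matrix.trace_mul_comm]
    simp [mul_assoc]
  have h3 : (A * ((p : ℂ) • A ^ (p - 1))).trace = (p : ℂ) * (A ^ p).trace := by
    rw [Matrix.mul_smul, Matrix.trace_smul, smul_eq_mul]
    congr 2
    conv_rhs => rw [show p = p - 1 + 1 by omega]
    rw [pow_succ']
  rw [h2, h3]
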